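/- Let p be a prime, let r₁, r₂ be natural numbers, and let V be a matrix with r₁ rows and r₂ + r₁ columns with entries in the ring ℤ_p of p-adic integers. Then there exists a matrix k of size (r₂ + r₁) × (r₂ + r₁) over ℤ_p that is a unit of the matrix ring (i.e. invertible over ℤ_p) such that the first r₂ columns of V * k are zero: for every row index i and every column index j with j < r₂, (V * k) i j = 0. -/

import Mathlib

open Matrix

/-- Non-archimedean matrix lemma (case `O_D = ℤ_p`): for any `r₁ × (r₂ + r₁)`
matrix `V` over `ℤ_[p]`, there is a matrix `k` invertible over `ℤ_[p]` such
that the first `r₂` columns of `V * k` vanish. -/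
theorem stmt_9 (p : ℕ) [Fact p.Prime] (r₁ r₂ : ℕ)
    (V : Matrix (Fin r₁) (Fin (r₂ + r₁)) ℤ_[p]) :
    ∃ k : Matrix (Fin (r₂ + r₁)) (Fin (r₂ + r₁)) ℤ_[p],
      IsUnit k ∧
      ∀ (i : Fin r₁) (j : Fin (r₂ + r₁)), (j : ℕ) < r₂ → (V * k) i j = 0 := by
  classical
  obtain ⟨n, snf⟩ :=
    (LinearMap.ker V.mulVecLin).smithNormalForm (Pi.basisFun ℤ_[p] (Fin (r₂ + r₁)))
  -- `r₂ ≤ n` by rank-nullity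
  have hr₂n : r₂ ≤ n := by
    have h1 := Submodule.rank_quotient_add_rank (LinearMap.ker V.mulVecLin)
    have h2 : Module.rank ℤ_[p] (LinearMap.ker V.mulVecLin) = n := by
      rw [rank_eq_card_basis snf.bN]; simp
    have h3 : Module.rank ℤ_[p] (Fin (r₂ + r₁) → ℤ_[p]) = (r₂ + r₁ : ℕ) := by simp
    have h4 : Module.rank ℤ_[p]
        ((Fin (r₂ + r₁) → ℤ_[p]) ⧸ LinearMap.ker V.mulVecLin) ≤ (r₁ : ℕ) := by
      rw [V.mulVecLin.quotKerEquivRange.rank_eq]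
      refine le_trans (Submodule.rank_le _) ?_
      simp
    have h5 : ((r₂ + r₁ : ℕ) : Cardinal) ≤ ((r₁ + n : ℕ) : Cardinal) := by
      rw [← h3, ← h1, h2]
      push_cast
      exact add_le_add_left h4 _
    have h6 : r₂ + r₁ ≤ r₁ + n := by exact_mod_cast h5
    omega
  -- each `snf.bM (snf.f i)` lies in the kernel, by saturation
  have hker : ∀ i : Fin n, snf.bM (snf.f i) ∈ LinearMap.ker V.mulVecLin := by
    intro i
    have ha : snf.a i ≠ 0 := by
      intro h
      have := snf.snf i
      rw [h, zero_smul] at this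
      exact (snf.bN.ne_zero i) (Subtype.ext this)
    have hmem : snf.a i • snf.bM (snf.f i) ∈ LinearMap.ker V.mulVecLin := by
      rw [← snf.snf i]; exact (snf.bN i).2
    rw [LinearMap.mem_ker] at hmem ⊢
    rw [_root_.map_smul] at hmem
    funext l
    have := congrFun hmem l
    simpa [smul_eq_mul, ha] using this
  -- build a permutation sending `j < r₂` into the range of `snf.f`
  set emb : Fin r₂ ↪ Fin (r₂ + r₁) := (Fin.castLEEmb hr₂n).trans snf.f with hemb
  have eP : {j : Fin (r₂ + r₁) // (j : ℕ) < r₂} ≃ Fin r₂ :=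
    { toFun := fun x => ⟨x.1, x.2⟩
      invFun := fun j => ⟨⟨j.1, by omega⟩, j.2⟩
      left_inv := fun x => by ext; rfl
      right_inv := fun j => by ext; rfl }
  have e₀ : {j : Fin (r₂ + r₁) // (j : ℕ) < r₂} ≃
      {j : Fin (r₂ + r₁) // j ∈ Set.range emb} :=
    eP.trans (Equiv.ofInjective emb emb.injective)
  set σ : Equiv.Perm (Fin (r₂ + r₁)) := e₀.extendSubtype with hσ
  have hσmem : ∀ (j : Fin (r₂ + r₁)), (j : ℕ) < r₂ →
      snf.bM (σ j) ∈ LinearMap.ker V.mulVecLin := by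
    intro j hj
    have hq : σ j ∈ Set.range emb := e₀.extendSubtype_mem j hj
    obtain ⟨i, hi⟩ := hq
    rw [← hi]
    exact hker _
  -- the matrix whose columns are `snf.bM (σ j)`
  set b' : Module.Basis (Fin (r₂ + r₁)) ℤ_[p] (Fin (r₂ + r₁) → ℤ_[p]) := snf.bM.reindex σ.symm with hb'
  set k : Matrix (Fin (r₂ + r₁)) (Fin (r₂ + r₁)) ℤ_[p] :=
    (Pi.basisFun ℤ_[p] (Fin (r₂ + r₁))).toMatrix b' with hk
  have hb'app : ∀ j, b' j = snf.bM (σ j) := by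
    intro j; rw [hb', Module.Basis.reindex_apply, Equiv.symm_symm]
  refine ⟨k, ?_, ?_⟩
  · letI := Module.Basis.invertibleToMatrix (Pi.basisFun ℤ_[p] (Fin (r₂ + r₁))) b'
    exact isUnit_of_invertible k
  · intro i j hj
    have hcol : (fun l => k l j) = b' j := by
      funext l
      rw [hk, Module.Basis.toMatrix_apply, Pi.basisFun_repr]
    have hmem : V.mulVecLin (b' j) = 0 := by
      rw [hb'app]; exact hσmem j hj
    have hzero : V.mulVec (b' j) = 0 := hmem
    calc (V * k) i j = (V.mulVec fun l => k l j) i := by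
          simp [Matrix.mul_apply, Matrix.mulVec, dotProduct]
      _ = 0 := by rw [hcol, hzero]; rfl
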